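/- Let X be a real symmetric n×n matrix that is positive semidefinite, has all entries nonnegative, and has rank at most 2. Then X is completely positive. -/

import Mathlib

open Matrix

/-- A minimal element for a total, transitive relation on a list. -/
private lemma list_exists_min {α : Type*} (r : α → α → Prop) :
    ∀ (l : List α), (∀ a ∈ l, ∀ b ∈ l, r a b ∨ r b a) →
    (∀ a ∈ l, ∀ b ∈ l, ∀ c ∈ l, r a b → r b c → r a c) →
    l ≠ [] → ∃ a ∈ l, ∀ b ∈ l, r a b := by
  intro l
  induction l with
  | nil => intro _ _ h; exact absurd rfl h
  | cons x xs ih =>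
    intro htot htrans _
    by_cases hxs : xs = []
    · subst hxs
      refine ⟨x, List.mem_cons_self (a := x), ?_⟩
      intro b hb
      have hx := htot x (List.mem_cons_self (a := x)) x (List.mem_cons_self (a := x))
      rcases List.mem_singleton.mp hb with rfl
      rcases hx with h | h <;> exact h
    · obtain ⟨a, ha, hmin⟩ := ih
        (fun a ha b hb => htot a (List.mem_cons_of_mem _ ha) b (List.mem_cons_of_mem _ hb))
        (fun a ha b hb c hc => htrans a (List.mem_cons_of_mem _ ha) b (List.mem_cons_of_mem _ hb)
          c (List.mem_cons_of_mem _ hc)) hxs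
      rcases htot a (List.mem_cons_of_mem _ ha) x (List.mem_cons_self (a := x)) with hax | hxa
      · refine ⟨a, List.mem_cons_of_mem _ ha, ?_⟩
        intro b hb
        rcases List.mem_cons.mp hb with rfl | hb
        · exact hax
        · exact hmin b hb
      · refine ⟨x, List.mem_cons_self (a := x), ?_⟩
        intro b hb
        rcases List.mem_cons.mp hb with rfl | hb
        · rcases htot b (List.mem_cons_self (a := b)) b (List.mem_cons_self (a := b)) with h | h <;> exact h
        · exact htrans x (List.mem_cons_self (a := x)) a (List.mem_cons_of_mem _ ha)
            b (List.mem_cons_of_mem _ hb) hxa (hmin b hb)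

/-- Rotation step: an `n × 2` matrix whose Gram matrix is entrywise nonnegative can be
rotated to be entrywise nonnegative. -/
private lemma rotate_step (n : ℕ) (B : Matrix (Fin n) (Fin 2) ℝ)
    (hg : ∀ i j, 0 ≤ (B * Bᵀ) i j) :
    ∃ U : Matrix (Fin n) (Fin 2) ℝ, (∀ i j, 0 ≤ U i j) ∧ U * Uᵀ = B * Bᵀ := by
  classical
  have hdot : ∀ i j, 0 ≤ B i 0 * B j 0 + B i 1 * B j 1 := by
    intro i j
    have := hg i j
    simpa [Matrix.mul_apply, Fin.sum_univ_two] using this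
  set l : List (Fin n) := (List.finRange n).filter (fun i => B i 0 ≠ 0 ∨ B i 1 ≠ 0) with hl
  have meml : ∀ i, i ∈ l ↔ (B i 0 ≠ 0 ∨ B i 1 ≠ 0) := by
    intro i
    simp [hl, List.mem_filter, List.mem_finRange]
  have notmem : ∀ i, i ∉ l → B i 0 = 0 ∧ B i 1 = 0 := by
    intro i hi
    by_contra h
    push_neg at h
    exact hi ((meml i).mpr (by tauto))
  by_cases hle : l = []
  · -- all rows of B are zero
    refine ⟨B, ?_, rfl⟩
    intro i j
    have := notmem i (by simp [hle])
    fin_cases j <;> simp [this.1, this.2]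
  · -- choose an extreme row
    set r : Fin n → Fin n → Prop := fun i j => 0 ≤ B i 0 * B j 1 - B i 1 * B j 0 with hr
    have htot : ∀ a ∈ l, ∀ b ∈ l, r a b ∨ r b a := by
      intro a _ b _
      rcases le_total 0 (B a 0 * B b 1 - B a 1 * B b 0) with h | h
      · exact Or.inl h
      · exact Or.inr (by simp only [hr]; linarith)
    have htrans : ∀ a ∈ l, ∀ b ∈ l, ∀ c ∈ l, r a b → r b c → r a c := by
      intro a _ b hb c _ hab hbc
      have hbnz : B b 0 ≠ 0 ∨ B b 1 ≠ 0 := (meml b).mp hb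
      have hbpos : 0 < B b 0 ^ 2 + B b 1 ^ 2 := by
        rcases hbnz with h | h <;> positivity
      simp only [hr] at hab hbc ⊢
      have key : (B a 0 * B c 1 - B a 1 * B c 0) * (B b 0 ^ 2 + B b 1 ^ 2)
          = (B a 0 * B b 1 - B a 1 * B b 0) * (B b 0 * B c 0 + B b 1 * B c 1)
            + (B a 0 * B b 0 + B a 1 * B b 1) * (B b 0 * B c 1 - B b 1 * B c 0) := by ring
      nlinarith [hdot a b, hdot b c, mul_nonneg hab (hdot b c), mul_nonneg (hdot a b) hbc]
    obtain ⟨i₀, hi₀, hmin⟩ := list_exists_min r l htot htrans hle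
    set b0 := B i₀ 0 with hb0
    set b1 := B i₀ 1 with hb1
    have hbnz : b0 ≠ 0 ∨ b1 ≠ 0 := (meml i₀).mp hi₀
    have hpos : 0 < b0 ^ 2 + b1 ^ 2 := by rcases hbnz with h | h <;> positivity
    set c := Real.sqrt (b0 ^ 2 + b1 ^ 2) with hc
    have hcpos : 0 < c := Real.sqrt_pos.mpr hpos
    have hcsq : c ^ 2 = b0 ^ 2 + b1 ^ 2 := Real.sq_sqrt hpos.le
    set U : Matrix (Fin n) (Fin 2) ℝ :=
      Matrix.of (fun j m => if m = 0 then (B j 0 * b0 + B j 1 * b1) / c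
        else (b0 * B j 1 - b1 * B j 0) / c) with hU
    refine ⟨U, ?_, ?_⟩
    · intro j m
      fin_cases m
      · have := hdot j i₀
        simpa [hU] using div_nonneg (by linarith) hcpos.le
      · have hcr : 0 ≤ b0 * B j 1 - b1 * B j 0 := by
          by_cases hj : j ∈ l
          · exact hmin j hj
          · have := notmem j hj
            simp [this.1, this.2]
        simpa [hU] using div_nonneg hcr hcpos.le
    · ext j k
      have hc2 : c * c ≠ 0 := by positivity
      simp only [Matrix.mul_apply, Fin.sum_univ_two, Matrix.transpose_apply, hU, Matrix.of_apply]
      simp only [if_pos rfl, if_neg (by decide : (1 : Fin 2) ≠ 0), if_true]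
      rw [div_mul_div_comm, div_mul_div_comm, ← add_div, div_eq_iff hc2]
      have hcc : c * c = b0 ^ 2 + b1 ^ 2 := by rw [← sq]; exact hcsq
      rw [hcc]; ring

/-- A real positive semidefinite matrix with nonnegative entries and rank at most 2
is completely positive. -/
theorem rank_le_two_nonneg_posSemidef_completelyPositive (n : ℕ)
    (X : Matrix (Fin n) (Fin n) ℝ) (hX : X.PosSemidef)
    (hnn : ∀ i j, 0 ≤ X i j) (hr : X.rank ≤ 2) :
    ∃ (k : ℕ) (U : Matrix (Fin n) (Fin k) ℝ),
      (∀ i j, 0 ≤ U i j) ∧ X = U * Uᵀ := by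
  classical
  have hH : X.IsHermitian := hX.isHermitian
  set lam := hH.eigenvalues with hlam
  have hcard : Fintype.card {i // lam i ≠ 0} ≤ 2 := by
    have h1 := hH.rank_eq_card_non_zero_eigs
    rw [hlam]
    omega
  obtain ⟨e⟩ : Nonempty ({i // lam i ≠ 0} ↪ Fin 2) :=
    Function.Embedding.nonempty_of_card_le (by simpa using hcard)
  have hnonneg : ∀ i, 0 ≤ lam i := fun i => hX.eigenvalues_nonneg i
  set D : Matrix (Fin n) (Fin 2) ℝ :=
    Matrix.of (fun i m => if h : lam i ≠ 0 then
      (if e ⟨i, h⟩ = m then Real.sqrt (lam i) else 0) else 0) with hD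
  have hDD : D * Dᵀ = Matrix.diagonal lam := by
    ext i j
    simp only [Matrix.mul_apply, Fin.sum_univ_two, Matrix.transpose_apply, hD, Matrix.of_apply,
      Matrix.diagonal_apply]
    by_cases hi : lam i ≠ 0
    · by_cases hj : lam j ≠ 0
      · rw [dif_pos hi, dif_pos hi, dif_pos hj, dif_pos hj]
        have m01 : ∀ m : Fin 2, m = 0 ∨ m = 1 := by decide
        by_cases hij : i = j
        · subst hij
          have h2 : Real.sqrt (lam i) * Real.sqrt (lam i) = lam i :=
            Real.mul_self_sqrt (hnonneg i)
          rcases m01 (e ⟨i, hi⟩) with h | h <;> simp [h, h2]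
        · have hne : e ⟨i, hi⟩ ≠ e ⟨j, hj⟩ := by
            intro h
            exact hij (Subtype.mk_eq_mk.mp (e.injective h))
          rw [if_neg hij]
          rcases m01 (e ⟨i, hi⟩) with h | h <;>
            rcases m01 (e ⟨j, hj⟩) with h' | h' <;>
              first
                | (exfalso; exact hne (h.trans h'.symm))
                | simp [h, h']
      · push_neg at hj
        have hij : i ≠ j := fun h => hi (by rw [h]; exact hj)
        simp [hj, hij]
    · push_neg at hi
      simp [hi]
  set V : Matrix (Fin n) (Fin n) ℝ := (hH.eigenvectorUnitary : Matrix (Fin n) (Fin n) ℝ) with hV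
  have hspec : X = V * Matrix.diagonal lam * Vᵀ := by
    have := hH.spectral_theorem
    simpa [hV, Matrix.star_eq_conjTranspose, Matrix.conjTranspose_eq_transpose_of_trivial,
      Function.comp] using this
  set B : Matrix (Fin n) (Fin 2) ℝ := V * D with hB
  have hXB : X = B * Bᵀ := by
    rw [hB, Matrix.transpose_mul, hspec, ← hDD]
    simp only [Matrix.mul_assoc]
  have hgram : ∀ i j, 0 ≤ (B * Bᵀ) i j := by
    intro i j
    rw [← hXB]
    exact hnn i j
  obtain ⟨U, hUnn, hUU⟩ := rotate_step n B hgram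
  exact ⟨2, U, hUnn, by rw [hXB, hUU]⟩
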